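/- For positive integers l, p and nonnegative integers m, n_1, n_2: z_p^m * z_p^{n_1} z_l z_p^{n_2} = Σ_{i=0}^{m} [ (z_p^i * z_p^{n_1}) z_l + (z_p^{i-1} * z_p^{n_1}) z_{p+l} ] (z_p^{m-i} * z_p^{n_2}), with the convention z_p^{-1} = 0. -/

import Mathlib

open MonoidAlgebra Finset

abbrev H : Type := MonoidAlgebra ℚ (FreeMonoid ℕ+)

noncomputable def word (w : List ℕ+) : H := MonoidAlgebra.single (FreeMonoid.ofList w) 1

noncomputable def z (k : ℕ+) : H := word [k]

noncomputable def st : List ℕ+ → List ℕ+ → H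
  | [], w => word w
  | k :: w1, [] => word (k :: w1)
  | k :: w1, l :: w2 =>
      z k * st w1 (l :: w2) + z l * st (k :: w1) w2 + z (k + l) * st w1 w2
termination_by a b => a.length + b.length
decreasing_by all_goals (simp; try omega)

lemma word_nil : word [] = 1 := rfl
lemma word_append (a b : List ℕ+) : word (a ++ b) = word a * word b := by
  simp [word, MonoidAlgebra.single_mul_single]
lemma word_cons (k : ℕ+) (w : List ℕ+) : z k * word w = word (k :: w) := by
  rw [z, ← word_append]; rfl
lemma st_nil (w : List ℕ+) : st [] w = word w := by rw [st]
lemma st_nil' (w : List ℕ+) : st w [] = word w := by cases w <;> rw [st]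
lemma st_cons (k l : ℕ+) (w1 w2 : List ℕ+) : st (k :: w1) (l :: w2) =
    z k * st w1 (l :: w2) + z l * st (k :: w1) w2 + z (k + l) * st w1 w2 := by rw [st]

lemma word_rep_succ (p : ℕ+) (i : ℕ) :
    word (List.replicate (i+1) p) = z p * word (List.replicate i p) := by
  rw [List.replicate_succ, word_cons]

lemma st_zero_rec (p : ℕ+) (i : ℕ) :
    st (List.replicate (i+1) p) [] = z p * st (List.replicate i p) [] := by
  rw [st_nil', st_nil', List.replicate_succ, word_cons]

lemma st_zero_rec' (p : ℕ+) (j : ℕ) :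
    st [] (List.replicate (j+1) p) = z p * st [] (List.replicate j p) := by
  rw [st_nil, st_nil, List.replicate_succ, word_cons]

lemma st_pow_rec (p : ℕ+) (i j : ℕ) :
    st (List.replicate (i+1) p) (List.replicate (j+1) p)
      = z p * st (List.replicate i p) (List.replicate (j+1) p)
        + z p * st (List.replicate (i+1) p) (List.replicate j p)
        + z (p + p) * st (List.replicate i p) (List.replicate j p) := by
  rw [List.replicate_succ (a := p) (n := i), List.replicate_succ (a := p) (n := j), st_cons,
    ← List.replicate_succ (a := p) (n := i), ← List.replicate_succ (a := p) (n := j)]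

theorem st_zero_two (l p : ℕ+) (m n1 n2 : ℕ) :
    st (List.replicate m p) (List.replicate n1 p ++ l :: List.replicate n2 p) =
      ∑ i ∈ Finset.range (m + 1),
        (st (List.replicate i p) (List.replicate n1 p) * z l
          + if 1 ≤ i then st (List.replicate (i - 1) p) (List.replicate n1 p) * z (p + l)
            else 0)
        * st (List.replicate (m - i) p) (List.replicate n2 p) := by
  induction m generalizing n1 with
  | zero =>
    simp only [List.replicate_zero, zero_add, Finset.sum_range_one, st_nil, Nat.sub_self]
    rw [if_neg (by omega), add_zero, word_append, ← word_cons, ← mul_assoc]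
  | succ m ihm =>
    induction n1 with
    | zero =>
      have hR : (List.replicate 0 p : List ℕ+) ++ l :: List.replicate n2 p
          = l :: List.replicate n2 p := rfl
      rw [hR, List.replicate_succ, st_cons, ← List.replicate_succ]
      rw [show st (List.replicate m p) (l :: List.replicate n2 p)
            = st (List.replicate m p) (List.replicate 0 p ++ l :: List.replicate n2 p) from rfl,
        ihm 0]
      rw [Finset.sum_range_succ' _ (m+1)]
      have hterm : ∀ j ∈ Finset.range (m+1),
          (st (List.replicate (j+1) p) (List.replicate 0 p) * z l
            + if 1 ≤ j + 1 then st (List.replicate (j+1-1) p) (List.replicate 0 p) * z (p + l)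
              else 0)
          * st (List.replicate (m+1-(j+1)) p) (List.replicate n2 p)
          = z p * ((st (List.replicate j p) (List.replicate 0 p) * z l
              + if 1 ≤ j then st (List.replicate (j-1) p) (List.replicate 0 p) * z (p + l)
                else 0)
            * st (List.replicate (m-j) p) (List.replicate n2 p))
            + (if j = 0 then z (p + l) * st (List.replicate m p) (List.replicate n2 p) else 0) := by
        intro j _
        simp only [Nat.add_sub_cancel, Nat.succ_sub_succ, List.replicate_zero]
        rw [if_pos (by omega)]
        rcases j with _ | k
        · rw [if_neg (by omega : ¬ (1:ℕ) ≤ 0), if_pos rfl]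
          simp only [st_nil', word_rep_succ, List.replicate_zero, word_nil, Nat.sub_zero]
          noncomm_ring
        · rw [if_pos (by omega), if_neg (by omega : ¬ k + 1 = 0), Nat.add_sub_cancel]
          simp only [Nat.sub_zero, List.replicate_zero, st_zero_rec]
          noncomm_ring
      rw [Finset.sum_congr rfl hterm]
      rw [Finset.sum_add_distrib, Finset.sum_ite_eq' (Finset.range (m+1)) 0]
      rw [if_pos (by simp)]
      simp only [Nat.sub_zero, Nat.sub_self, List.replicate_zero, st_nil, word_nil,
        if_neg (by omega : ¬ (1:ℕ) ≤ 0)]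
      rw [← Finset.mul_sum]
      noncomm_ring
    | succ n1 ihn =>
      have hR : List.replicate (n1+1) p ++ l :: List.replicate n2 p
          = p :: (List.replicate n1 p ++ l :: List.replicate n2 p) := rfl
      rw [List.replicate_succ (a := p) (n := m), hR, st_cons, ← hR, ← List.replicate_succ (a := p) (n := m),
        ihm (n1+1), ihn, ihm n1]
      rw [Finset.sum_range_succ' _ (m+1), Finset.sum_range_succ' _ (m+1)]
      have hterm2 : ∀ k ∈ Finset.range (m+1),
          (st (List.replicate (k+1) p) (List.replicate (n1+1) p) * z l
            + if 1 ≤ k + 1 then st (List.replicate (k+1-1) p) (List.replicate (n1+1) p) * z (p + l)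
              else 0)
          * st (List.replicate (m+1-(k+1)) p) (List.replicate n2 p)
          = z p * ((st (List.replicate k p) (List.replicate (n1+1) p) * z l
              + if 1 ≤ k then st (List.replicate (k-1) p) (List.replicate (n1+1) p) * z (p + l)
                else 0) * st (List.replicate (m-k) p) (List.replicate n2 p))
            + z p * ((st (List.replicate (k+1) p) (List.replicate n1 p) * z l
              + if 1 ≤ k + 1 then st (List.replicate (k+1-1) p) (List.replicate n1 p) * z (p + l)
                else 0) * st (List.replicate (m+1-(k+1)) p) (List.replicate n2 p))
            + z (p + p) * ((st (List.replicate k p) (List.replicate n1 p) * z l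
              + if 1 ≤ k then st (List.replicate (k-1) p) (List.replicate n1 p) * z (p + l)
                else 0) * st (List.replicate (m-k) p) (List.replicate n2 p)) := by
        intro k _
        simp only [Nat.add_sub_cancel, Nat.succ_sub_succ, if_pos (Nat.le_add_left 1 k)]
        rcases k with _ | k
        · simp only [List.replicate_zero, st_nil, Nat.sub_zero, st_pow_rec, word_rep_succ,
            if_neg (by omega : ¬ (1:ℕ) ≤ 0)]
          noncomm_ring
        · simp only [if_pos (by omega : 1 ≤ k + 1), Nat.add_sub_cancel, Nat.sub_zero, st_pow_rec]
          noncomm_ring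
      rw [Finset.sum_congr rfl hterm2, Finset.sum_add_distrib, Finset.sum_add_distrib,
        ← Finset.mul_sum, ← Finset.mul_sum, ← Finset.mul_sum]
      simp only [List.replicate_zero, st_nil, Nat.sub_zero, word_rep_succ,
        if_neg (by omega : ¬ (1:ℕ) ≤ 0), add_zero]
      noncomm_ring
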